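/- Let T be an N×N Markov matrix with all entries bounded below by δ > 0 and stationary distribution π. Then T is a strict contraction on L²_0(π) = {v ∈ ℝ^N : Σ_i π_i v_i = 0}, with operator norm at most 1 - Nδ/2. Consequently, for any b ∈ L²_0(π) and ε > 0, the fixed-point equation Φ = T Φ + ε b has a unique solution Φ ∈ L²_0(π). -/

import Mathlib

open Finset

noncomputable section

/-- an `N × N` Markov matrix `T` with all entries bounded below by
`δ > 0` and stationary distribution `π` is a strict contraction on
`L²₀(π) = {v : Σ_i π_i v_i = 0}`, with operator norm at most `1 - Nδ/2`.
Consequently, for any `b ∈ L²₀(π)` and `ε > 0`, the fixed-point equation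
`Φ = TΦ + εb` has a unique solution `Φ ∈ L²₀(π)`. -/
theorem markov_matrix_contraction_unique_fixed_point
    (N : ℕ) (hN : 0 < N) (T : Matrix (Fin N) (Fin N) ℝ) (π : Fin N → ℝ)
    (δ : ℝ) (hδ : 0 < δ) (hTδ : ∀ i j, δ ≤ T i j)
    (hrow : ∀ i, ∑ j, T i j = 1)
    (hπ0 : ∀ i, 0 ≤ π i) (hπ1 : ∑ i, π i = 1)
    (hstat : ∀ j, ∑ i, π i * T i j = π j)
    (b : Fin N → ℝ) (hb : ∑ i, π i * b i = 0) (ε : ℝ) (hε : 0 < ε) :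
    (∀ v : Fin N → ℝ, ∑ i, π i * v i = 0 →
      ∑ i, π i * (∑ j, T i j * v j) ^ 2 ≤ (1 - N * δ / 2) ^ 2 * ∑ i, π i * (v i) ^ 2) ∧
    (∃! Φ : Fin N → ℝ, (∑ i, π i * Φ i = 0) ∧
      ∀ i, Φ i = (∑ j, T i j * Φ j) + ε * b i) := by
  have i0 : Fin N := ⟨0, hN⟩
  have hNpos : (0:ℝ) < N := by exact_mod_cast hN
  have hNδ : (N : ℝ) * δ ≤ 1 := by
    have h1 : ∑ _j : Fin N, δ ≤ ∑ j, T i0 j := Finset.sum_le_sum fun j _ => hTδ i0 j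
    simpa [hrow i0, mul_comm] using h1
  -- π-weighted mean is preserved by T
  have hπT : ∀ x : Fin N → ℝ,
      ∑ i, π i * (∑ j, T i j * x j) = ∑ j, π j * x j := by
    intro x
    calc ∑ i, π i * ∑ j, T i j * x j
        = ∑ i, ∑ j, π i * T i j * x j := by
          refine Finset.sum_congr rfl fun i _ => ?_
          rw [Finset.mul_sum]; exact Finset.sum_congr rfl fun j _ => by ring
      _ = ∑ j, ∑ i, π i * T i j * x j := Finset.sum_comm
      _ = ∑ j, (∑ i, π i * T i j) * x j := by
          refine Finset.sum_congr rfl fun j _ => ?_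
          rw [Finset.sum_mul]
      _ = ∑ j, π j * x j := by simp_rw [hstat]
  -- entrywise positivity of π
  have hπδ : ∀ j, δ ≤ π j := by
    intro j
    calc δ = (∑ i, π i) * δ := by rw [hπ1, one_mul]
      _ = ∑ i, π i * δ := by rw [Finset.sum_mul]
      _ ≤ ∑ i, π i * T i j := Finset.sum_le_sum fun i _ =>
          mul_le_mul_of_nonneg_left (hTδ i j) (hπ0 i)
      _ = π j := hstat j
  -- rows of S := T - δ sum to 1 - Nδ
  have hrowS : ∀ i, ∑ j, (T i j - δ) = 1 - N * δ := by
    intro i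
    rw [Finset.sum_sub_distrib, hrow]
    simp [mul_comm]
  -- main contraction inequality
  have key : ∀ v : Fin N → ℝ, ∑ i, π i * v i = 0 →
      ∑ i, π i * (∑ j, T i j * v j) ^ 2 ≤ (1 - N * δ / 2) ^ 2 * ∑ i, π i * (v i) ^ 2 := by
    intro v hv
    set s : ℝ := ∑ j, v j with hs
    set A : Fin N → ℝ := fun i => ∑ j, T i j * v j with hA
    set B : Fin N → ℝ := fun i => ∑ j, (T i j - δ) * v j with hB
    have hAB : ∀ i, B i = A i - δ * s := by
      intro i
      simp only [hB, hA, hs, sub_mul, Finset.sum_sub_distrib, ← Finset.mul_sum]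
    have hπA : ∑ i, π i * A i = 0 := by rw [hπT v]; exact hv
    have hπB : ∑ i, π i * B i = -(δ * s) := by
      calc ∑ i, π i * B i = ∑ i, (π i * A i - δ * s * π i) := by
            refine Finset.sum_congr rfl fun i _ => ?_
            rw [hAB i]; ring
        _ = (∑ i, π i * A i) - δ * s * ∑ i, π i := by
            rw [Finset.sum_sub_distrib, ← Finset.mul_sum]
        _ = -(δ * s) := by rw [hπA, hπ1]; ring
    -- Step A : removing the constant drift only decreases the norm
    have stepA : ∑ i, π i * (A i) ^ 2 = (∑ i, π i * (B i) ^ 2) - δ ^ 2 * s ^ 2 := by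
      have h1 : ∀ i, π i * (A i) ^ 2
          = π i * (B i) ^ 2 + (2 * δ * s) * (π i * B i) + δ ^ 2 * s ^ 2 * π i := by
        intro i
        have h := hAB i
        have hAi : A i = B i + δ * s := by linarith
        rw [hAi]; ring
      calc ∑ i, π i * (A i) ^ 2
          = ∑ i, (π i * (B i) ^ 2 + (2 * δ * s) * (π i * B i) + δ ^ 2 * s ^ 2 * π i) :=
            Finset.sum_congr rfl fun i _ => h1 i
        _ = (∑ i, π i * (B i) ^ 2) + (2 * δ * s) * (∑ i, π i * B i)
            + δ ^ 2 * s ^ 2 * ∑ i, π i := by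
            rw [Finset.sum_add_distrib, Finset.sum_add_distrib, ← Finset.mul_sum,
              ← Finset.mul_sum]
        _ = (∑ i, π i * (B i) ^ 2) - δ ^ 2 * s ^ 2 := by rw [hπB, hπ1]; ring
    -- Step B : Cauchy-Schwarz per row
    have hCS : ∀ i, (B i) ^ 2 ≤ (1 - N * δ) * ∑ j, (T i j - δ) * (v j) ^ 2 := by
      intro i
      have h := Finset.sum_sq_le_sum_mul_sum_of_sq_eq_mul Finset.univ
        (r := fun j => (T i j - δ) * v j) (f := fun j => T i j - δ)
        (g := fun j => (T i j - δ) * (v j) ^ 2)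
        (fun j _ => by show (0:ℝ) ≤ T i j - δ; linarith [hTδ i j])
        (fun j _ => by
          show (0:ℝ) ≤ (T i j - δ) * (v j) ^ 2
          exact mul_nonneg (by linarith [hTδ i j]) (sq_nonneg _))
        (fun j _ => by show ((T i j - δ) * v j) ^ 2 = (T i j - δ) * ((T i j - δ) * (v j) ^ 2); ring)
      rwa [hrowS i] at h
    have stepB : ∑ i, π i * (B i) ^ 2 ≤ (1 - N * δ) * ∑ j, π j * (v j) ^ 2 := by
      have h1 : ∑ i, π i * (B i) ^ 2
          ≤ ∑ i, π i * ((1 - N * δ) * ∑ j, (T i j - δ) * (v j) ^ 2) :=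
        Finset.sum_le_sum fun i _ => mul_le_mul_of_nonneg_left (hCS i) (hπ0 i)
      have h2 : ∑ i, π i * ((1 - N * δ) * ∑ j, (T i j - δ) * (v j) ^ 2)
          = (1 - N * δ) * ∑ j, (π j - δ) * (v j) ^ 2 := by
        have h3 : ∑ i, π i * ∑ j, (T i j - δ) * (v j) ^ 2
            = ∑ j, (π j - δ) * (v j) ^ 2 := by
          calc ∑ i, π i * ∑ j, (T i j - δ) * (v j) ^ 2
              = ∑ i, ∑ j, π i * (T i j - δ) * (v j) ^ 2 := by
                refine Finset.sum_congr rfl fun i _ => ?_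
                rw [Finset.mul_sum]; exact Finset.sum_congr rfl fun j _ => by ring
            _ = ∑ j, ∑ i, π i * (T i j - δ) * (v j) ^ 2 := Finset.sum_comm
            _ = ∑ j, (∑ i, (π i * T i j - π i * δ)) * (v j) ^ 2 := by
                refine Finset.sum_congr rfl fun j _ => ?_
                rw [Finset.sum_mul]
                exact Finset.sum_congr rfl fun i _ => by ring
            _ = ∑ j, (π j - δ) * (v j) ^ 2 := by
                refine Finset.sum_congr rfl fun j _ => ?_
                rw [Finset.sum_sub_distrib, hstat j, ← Finset.sum_mul, hπ1, one_mul]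
        calc ∑ i, π i * ((1 - N * δ) * ∑ j, (T i j - δ) * (v j) ^ 2)
            = (1 - N * δ) * ∑ i, π i * ∑ j, (T i j - δ) * (v j) ^ 2 := by
              rw [Finset.mul_sum]; exact Finset.sum_congr rfl fun i _ => by ring
          _ = (1 - N * δ) * ∑ j, (π j - δ) * (v j) ^ 2 := by rw [h3]
      have h4 : (1 - N * δ) * ∑ j, (π j - δ) * (v j) ^ 2
          ≤ (1 - N * δ) * ∑ j, π j * (v j) ^ 2 := by
        apply mul_le_mul_of_nonneg_left _ (by linarith)
        refine Finset.sum_le_sum fun j _ => ?_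
        have := sq_nonneg (v j)
        nlinarith
      calc ∑ i, π i * (B i) ^ 2 ≤ _ := h1
        _ = (1 - N * δ) * ∑ j, (π j - δ) * (v j) ^ 2 := h2
        _ ≤ (1 - N * δ) * ∑ j, π j * (v j) ^ 2 := h4
    have hQ0 : 0 ≤ ∑ i, π i * (v i) ^ 2 :=
      Finset.sum_nonneg fun i _ => mul_nonneg (hπ0 i) (sq_nonneg _)
    have hfinal : (1 - N * δ) * ∑ j, π j * (v j) ^ 2
        ≤ (1 - N * δ / 2) ^ 2 * ∑ i, π i * (v i) ^ 2 := by
      have : (1 - N * δ) ≤ (1 - N * δ / 2) ^ 2 := by nlinarith [sq_nonneg ((N:ℝ) * δ)]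
      exact mul_le_mul_of_nonneg_right this hQ0
    calc ∑ i, π i * (A i) ^ 2
        = (∑ i, π i * (B i) ^ 2) - δ ^ 2 * s ^ 2 := stepA
      _ ≤ ∑ i, π i * (B i) ^ 2 := by nlinarith [sq_nonneg (δ * s), sq_nonneg δ, sq_nonneg s]
      _ ≤ (1 - N * δ) * ∑ j, π j * (v j) ^ 2 := stepB
      _ ≤ (1 - N * δ / 2) ^ 2 * ∑ i, π i * (v i) ^ 2 := hfinal
  refine ⟨key, ?_⟩
  -- fixed points of the homogeneous equation are zero
  have hfix0 : ∀ w : Fin N → ℝ, (∑ i, π i * w i = 0) →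
      (∀ i, w i = ∑ j, T i j * w j) → w = 0 := by
    intro w hw hfw
    have h1 := key w hw
    have heq : ∑ i, π i * (∑ j, T i j * w j) ^ 2 = ∑ i, π i * (w i) ^ 2 :=
      Finset.sum_congr rfl fun i _ => by rw [← hfw i]
    have hQ0 : 0 ≤ ∑ i, π i * (w i) ^ 2 :=
      Finset.sum_nonneg fun i _ => mul_nonneg (hπ0 i) (sq_nonneg _)
    have hNδpos : 0 < (N:ℝ) * δ := mul_pos hNpos hδ
    have hc : (1 - N * δ / 2) ^ 2 < 1 := by nlinarith
    have hQ : ∑ i, π i * (w i) ^ 2 = 0 := by nlinarith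
    funext i
    have h2 := (Finset.sum_eq_zero_iff_of_nonneg
      (fun i _ => mul_nonneg (hπ0 i) (sq_nonneg (w i)))).mp hQ i (Finset.mem_univ i)
    have hπi : 0 < π i := lt_of_lt_of_le hδ (hπδ i)
    have h3 : (w i) ^ 2 = 0 := by
      rcases mul_eq_zero.mp h2 with h | h
      · exact absurd h (ne_of_gt hπi)
      · exact h
    simpa using pow_eq_zero_iff (by norm_num) |>.mp h3
  -- linear-algebra setup
  let φ : (Fin N → ℝ) →ₗ[ℝ] ℝ :=
    { toFun := fun v => ∑ i, π i * v i
      map_add' := fun x y => by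
        simp only [Pi.add_apply, mul_add, Finset.sum_add_distrib]
      map_smul' := fun c x => by
        simp only [Pi.smul_apply, smul_eq_mul, RingHom.id_apply, Finset.mul_sum]
        exact Finset.sum_congr rfl fun i _ => by ring }
  let V := LinearMap.ker φ
  have hmemV : ∀ v : Fin N → ℝ, v ∈ V ↔ ∑ i, π i * v i = 0 := fun v => LinearMap.mem_ker
  let f : (Fin N → ℝ) →ₗ[ℝ] (Fin N → ℝ) := LinearMap.id - T.mulVecLin
  have hmulVec : ∀ (x : Fin N → ℝ) (i : Fin N), T.mulVec x i = ∑ j, T i j * x j := by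
    intro x i
    simp [Matrix.mulVec, dotProduct]
  have hfV : ∀ x ∈ V, f x ∈ V := by
    intro x hx
    rw [hmemV] at hx ⊢
    have : ∀ i, f x i = x i - ∑ j, T i j * x j := by
      intro i
      simp [f, Matrix.mulVecLin_apply, hmulVec]
    calc ∑ i, π i * f x i = ∑ i, (π i * x i - π i * ∑ j, T i j * x j) := by
          exact Finset.sum_congr rfl fun i _ => by rw [this i]; ring
      _ = (∑ i, π i * x i) - ∑ i, π i * ∑ j, T i j * x j := Finset.sum_sub_distrib _ _
      _ = 0 := by rw [hx, hπT x, hx, sub_zero]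
  let g : V →ₗ[ℝ] V := f.restrict hfV
  have hginj : Function.Injective g := by
    rw [injective_iff_map_eq_zero]
    intro x hx
    have hgx : ((g x : V) : Fin N → ℝ) = f (x : Fin N → ℝ) := rfl
    have h1 : f (x : Fin N → ℝ) = 0 := by rw [← hgx, hx]; rfl
    have hx0 : (x : Fin N → ℝ) = 0 := by
      apply hfix0 _ ((hmemV _).mp x.2)
      intro i
      have h2 := congrFun h1 i
      simp only [f, LinearMap.sub_apply, LinearMap.id_apply, Matrix.mulVecLin_apply,
        Pi.sub_apply, Pi.zero_apply] at h2
      rw [hmulVec] at h2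
      linarith
    exact Subtype.ext hx0
  have hgsurj : Function.Surjective g := LinearMap.injective_iff_surjective.mp hginj
  have hεb : ε • b ∈ V := by
    rw [hmemV]
    calc ∑ i, π i * (ε • b) i = ε * ∑ i, π i * b i := by
          rw [Finset.mul_sum]
          exact Finset.sum_congr rfl fun i _ => by simp [smul_eq_mul]; ring
      _ = 0 := by rw [hb, mul_zero]
  obtain ⟨Φ, hΦ⟩ := hgsurj ⟨ε • b, hεb⟩
  have hΦeq : (Φ : Fin N → ℝ) - T.mulVec Φ = ε • b := by
    have hgΦ : ((g Φ : V) : Fin N → ℝ) = (Φ : Fin N → ℝ) - T.mulVec Φ := rfl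
    rw [← hgΦ, hΦ]
  refine ⟨Φ, ⟨(hmemV _).mp Φ.2, fun i => ?_⟩, ?_⟩
  · have h2 := congrFun hΦeq i
    simp only [Pi.sub_apply, Pi.smul_apply, smul_eq_mul] at h2
    rw [hmulVec] at h2
    linarith
  · rintro Ψ ⟨hΨ0, hΨeq⟩
    have hw : (fun i => Ψ i - (Φ : Fin N → ℝ) i) = 0 := by
      apply hfix0
      · calc ∑ i, π i * (Ψ i - (Φ : Fin N → ℝ) i)
            = (∑ i, π i * Ψ i) - ∑ i, π i * (Φ : Fin N → ℝ) i := by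
              rw [← Finset.sum_sub_distrib]
              exact Finset.sum_congr rfl fun i _ => by ring
          _ = 0 := by rw [hΨ0, (hmemV _).mp Φ.2, sub_zero]
      · intro i
        have hΦi : (Φ : Fin N → ℝ) i = (∑ j, T i j * (Φ : Fin N → ℝ) j) + ε * b i := by
          have h2 := congrFun hΦeq i
          simp only [Pi.sub_apply, Pi.smul_apply, smul_eq_mul] at h2
          rw [hmulVec] at h2
          linarith
        rw [hΨeq i, hΦi]
        have hsplit : ∑ j, T i j * (Ψ j - (Φ : Fin N → ℝ) j)
            = (∑ j, T i j * Ψ j) - ∑ j, T i j * (Φ : Fin N → ℝ) j := by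
          rw [← Finset.sum_sub_distrib]
          exact Finset.sum_congr rfl fun j _ => by ring
        rw [hsplit]
        ring
    funext i
    have := congrFun hw i
    simp only [Pi.zero_apply] at this
    linarith

end
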